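/- Let (X,d) be a metric space, γ : [0,1] → X a continuous path of finite length L, and f : X → ℂ a function with local Lipschitz constant at most 1 in the following sense: for every ε > 0 and every x ∈ X there exists δ > 0 such that |f(y) − f(z)| ≤ (1+ε)·d(y,z) for all y, z in the ball B(x,δ). Then the total variation of f∘γ over [0,1] is at most L; in particular |f(γ(1)) − f(γ(0))| ≤ L. -/

import Mathlib

open scoped ENNReal

open Set Metric

private lemma var_comp_le {X : Type*} [MetricSpace X] (γ : ℝ → X)
    (hγ : ContinuousOn γ (Set.Icc 0 1)) (f : X → ℂ) {ε : ℝ} (hε : 0 < ε)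
    (hf : ∀ x : X, ∃ δ : ℝ, 0 < δ ∧
      ∀ y ∈ Metric.ball x δ, ∀ z ∈ Metric.ball x δ,
        dist (f y) (f z) ≤ (1 + ε) * dist y z) :
    eVariationOn (fun t => f (γ t)) (Set.Icc 0 1) ≤
      (Real.toNNReal (1 + ε)) * eVariationOn γ (Set.Icc 0 1) := by
  classical
  choose δ hδpos hδlip using hf
  -- compact image
  have hS : IsCompact (γ '' Icc (0:ℝ) 1) := isCompact_Icc.image_of_continuousOn hγ
  obtain ⟨η, ηpos, hη⟩ := lebesgue_number_lemma_of_metric (c := fun x : X => ball x (δ x)) hS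
    (fun x => isOpen_ball) (fun y _ => Set.mem_iUnion.2 ⟨y, mem_ball_self (hδpos y)⟩)
  -- uniform continuity
  have hUC : UniformContinuousOn γ (Icc (0:ℝ) 1) :=
    isCompact_Icc.uniformContinuousOn_of_continuous hγ
  obtain ⟨ρ, ρpos, hρ⟩ := Metric.uniformContinuousOn_iff.1 hUC η ηpos
  obtain ⟨n, hn⟩ := exists_nat_gt (1/ρ)
  have hnpos : 0 < (n:ℝ) := lt_trans (by positivity) hn
  have hmesh : 1 / (n:ℝ) < ρ := by
    rw [div_lt_iff₀ hnpos]
    rw [div_lt_iff₀ ρpos] at hn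
    linarith
  have hn0 : (n:ℝ) ≠ 0 := ne_of_gt hnpos
  -- per-interval estimate
  have hstep : ∀ k : ℕ, k < n →
      eVariationOn (fun t => f (γ t)) (Icc (0:ℝ) 1 ∩ Icc ((k:ℝ)/n) ((k+1:ℝ)/n)) ≤
        (Real.toNNReal (1 + ε)) * eVariationOn γ (Icc (0:ℝ) 1 ∩ Icc ((k:ℝ)/n) ((k+1:ℝ)/n)) := by
    intro k hk
    have hk1 : ((k:ℝ)+1) ≤ n := by exact_mod_cast Nat.succ_le_of_lt hk
    have hkmem : (k:ℝ)/n ∈ Icc (0:ℝ) 1 := by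
      constructor
      · positivity
      · rw [div_le_one hnpos]; linarith
    obtain ⟨x, hx⟩ := hη (γ ((k:ℝ)/n)) ⟨_, hkmem, rfl⟩
    have hmaps : Set.MapsTo γ (Icc (0:ℝ) 1 ∩ Icc ((k:ℝ)/n) ((k+1:ℝ)/n)) (ball x (δ x)) := by
      intro t ht
      apply hx
      have hd : dist t ((k:ℝ)/n) < ρ := by
        rw [Real.dist_eq, abs_sub_lt_iff]
        have h1 := ht.2.1
        have h2 := ht.2.2
        have : ((k:ℝ)+1)/n - (k:ℝ)/n = 1/n := by ring
        constructor
        · linarith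
        · linarith
      exact mem_ball.2 (hρ t ht.1 ((k:ℝ)/n) hkmem hd)
    have hlip : LipschitzOnWith (Real.toNNReal (1 + ε)) f (ball x (δ x)) :=
      LipschitzOnWith.of_dist_le' fun y hy z hz => hδlip x y hy z hz
    exact hlip.comp_eVariationOn_le hmaps
  -- induction along the partition
  have hind : ∀ k : ℕ, k ≤ n →
      eVariationOn (fun t => f (γ t)) (Icc (0:ℝ) 1 ∩ Icc 0 ((k:ℝ)/n)) ≤
        (Real.toNNReal (1 + ε)) * eVariationOn γ (Icc (0:ℝ) 1 ∩ Icc 0 ((k:ℝ)/n)) := by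
    intro k
    induction k with
    | zero =>
      intro _
      have : (Icc (0:ℝ) 1 ∩ Icc 0 (((0:ℕ):ℝ)/n)).Subsingleton := by
        intro a ha b hb
        simp only [Nat.cast_zero, zero_div, mem_inter_iff, mem_Icc] at ha hb
        linarith [ha.2.1, ha.2.2, hb.2.1, hb.2.2]
      rw [eVariationOn.subsingleton _ this]
      exact zero_le
    | succ k ih =>
      intro hkn
      have hk : k < n := Nat.lt_of_succ_le hkn
      have hkn' : k ≤ n := le_of_lt hk
      have hk1 : ((k:ℝ)+1) ≤ n := by exact_mod_cast hkn
      have hkmem : (k:ℝ)/n ∈ Icc (0:ℝ) 1 := by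
        constructor
        · positivity
        · rw [div_le_one hnpos]; linarith
      have hab : (0:ℝ) ≤ (k:ℝ)/n := by positivity
      have hbc : (k:ℝ)/n ≤ ((k:ℝ)+1)/n := by
        gcongr
        linarith
      have hcast : (((k:ℕ)+1 : ℕ):ℝ) = (k:ℝ)+1 := by push_cast; ring
      rw [hcast, ← eVariationOn.Icc_add_Icc (fun t => f (γ t)) hab hbc hkmem,
        ← eVariationOn.Icc_add_Icc γ hab hbc hkmem, mul_add]
      exact add_le_add (ih hkn') (hstep k hk)
  have hfin := hind n le_rfl
  rw [div_self hn0] at hfin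
  simpa [Set.inter_self] using hfin

/-- If `γ : [0,1] → X` is a continuous path of finite length `L` and
`f : X → ℂ` has local Lipschitz constant at most `1` (for every `ε > 0` and `x ∈ X` there is
`δ > 0` with `|f(y) − f(z)| ≤ (1+ε)·d(y,z)` for `y, z ∈ B(x,δ)`), then the total variation of
`f ∘ γ` over `[0,1]` is at most `L`; in particular `|f(γ(1)) − f(γ(0))| ≤ L`. -/
theorem variation_le_length_of_locally_one_lipschitz
    {X : Type*} [MetricSpace X] (γ : ℝ → X) (L : ℝ) (hL : 0 ≤ L)
    (hγ : ContinuousOn γ (Set.Icc 0 1))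
    (hlen : eVariationOn γ (Set.Icc 0 1) ≤ ENNReal.ofReal L)
    (f : X → ℂ)
    (hf : ∀ ε : ℝ, 0 < ε → ∀ x : X, ∃ δ : ℝ, 0 < δ ∧
      ∀ y ∈ Metric.ball x δ, ∀ z ∈ Metric.ball x δ,
        dist (f y) (f z) ≤ (1 + ε) * dist y z) :
    eVariationOn (fun t => f (γ t)) (Set.Icc 0 1) ≤ ENNReal.ofReal L ∧
    dist (f (γ 1)) (f (γ 0)) ≤ L := by
  have key : eVariationOn (fun t => f (γ t)) (Set.Icc 0 1) ≤ ENNReal.ofReal L := by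
    apply ENNReal.le_of_forall_pos_le_add
    intro ε' hε' _
    set ε : ℝ := ε' / (L + 1) with hεdef
    have hεpos : 0 < ε := div_pos hε' (by linarith)
    calc eVariationOn (fun t => f (γ t)) (Set.Icc 0 1)
        ≤ (Real.toNNReal (1 + ε)) * eVariationOn γ (Set.Icc 0 1) :=
          var_comp_le γ hγ f hεpos (hf ε hεpos)
      _ ≤ (Real.toNNReal (1 + ε)) * ENNReal.ofReal L := by gcongr
      _ = ENNReal.ofReal ((1 + ε) * L) := by
          rw [ENNReal.ofReal_mul (by linarith)]
          rfl
      _ = ENNReal.ofReal L + ENNReal.ofReal (ε * L) := by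
          rw [← ENNReal.ofReal_add hL (by positivity)]; ring_nf
      _ ≤ ENNReal.ofReal L + ε' := by
          gcongr
          have : ε * L ≤ (ε' : ℝ) := by
            rw [hεdef, div_mul_eq_mul_div, div_le_iff₀ (by linarith : (0:ℝ) < L + 1)]
            nlinarith [ε'.coe_nonneg]
          calc ENNReal.ofReal (ε * L) ≤ ENNReal.ofReal (ε' : ℝ) :=
                ENNReal.ofReal_le_ofReal this
            _ = (ε' : ℝ≥0∞) := ENNReal.ofReal_coe_nnreal
  refine ⟨key, ?_⟩
  have h1 : (1:ℝ) ∈ Set.Icc (0:ℝ) 1 := by norm_num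
  have h0 : (0:ℝ) ∈ Set.Icc (0:ℝ) 1 := by norm_num
  have := (eVariationOn.edist_le (fun t => f (γ t)) h1 h0).trans key
  exact (edist_le_ofReal hL).1 this
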